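/- Let A = (a, ha+d, ha+jd) with a, j > 2, h ≥ d ≥ 1, gcd(a, d) = 1, write a = kj − t with k ≥ 1 and 0 ≤ t ≤ j−1, and assume hk + d − ht ≥ 0. Then the Sylvester number satisfies n(A) = (a−1)(ha+d−1)/2 − (h(j−1)(a−t)/2)·((a+t)/j − 1). -/

import Mathlib

/-- `m` is representable by the sequence `A`. -/
def IsRepresentable {n : ℕ} (A : Fin n → ℕ) (m : ℕ) : Prop :=
  ∃ x : Fin n → ℕ, m = ∑ i, A i * x i

/-- Apéry-set candidate: the minimal representable number congruent to `S·d` mod `a`. -/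
def gfun (a j h d S : ℕ) : ℕ := h * (S % j + S / j) * a + S * d

lemma gfun_eq (a j h d S : ℕ) :
    gfun a j h d S = (S % j) * (h*a+d) + (S / j) * (h*a+j*d) := by
  have hS : S % j + j * (S / j) = S := Nat.mod_add_div S j
  unfold gfun
  rw [show S * d = (S % j + j * (S / j)) * d from by rw [hS]]
  ring

lemma rep_iff (a j h d m : ℕ) :
    IsRepresentable ![a, h*a+d, h*a+j*d] m ↔
      ∃ X Y Z, m = X * a + Y * (h*a+d) + Z * (h*a+j*d) := by
  constructor
  · rintro ⟨x, rfl⟩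
    exact ⟨x 0, x 1, x 2, by simp [Fin.sum_univ_three]; ring⟩
  · rintro ⟨X, Y, Z, rfl⟩
    exact ⟨![X, Y, Z], by simp [Fin.sum_univ_three]; ring⟩

lemma rep_iff_g (a j h d m : ℕ) (hj : 0 < j) :
    IsRepresentable ![a, h*a+d, h*a+j*d] m ↔ ∃ S q, m = gfun a j h d S + a * q := by
  rw [rep_iff]
  constructor
  · rintro ⟨X, Y, Z, rfl⟩
    refine ⟨Y + j * Z, X + (h * (Y + Z) - h * ((Y + j*Z) % j + (Y + j*Z) / j)), ?_⟩
    have hdiv : (Y + j * Z) / j = Y / j + Z := Nat.add_mul_div_left Y Z hj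
    have hmod : (Y + j * Z) % j = Y % j := Nat.add_mul_mod_self_left Y j Z
    have hY : Y % j + j * (Y / j) = Y := Nat.mod_add_div Y j
    have hjj : Y / j ≤ j * (Y / j) := Nat.le_mul_of_pos_left _ hj
    have hle : (Y + j*Z) % j + (Y + j*Z) / j ≤ Y + Z := by
      rw [hdiv, hmod]; omega
    set A1 := h * (Y + Z) with hA1
    set A2 := h * ((Y + j*Z) % j + (Y + j*Z) / j) with hA2
    have hle2 : A2 ≤ A1 := Nat.mul_le_mul_left h hle
    have key : X * a + Y * (h*a+d) + Z * (h*a+j*d)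
        = A1 * a + (Y + j*Z) * d + a * X := by rw [hA1]; ring
    have h4 : gfun a j h d (Y + j*Z) = A2 * a + (Y + j*Z) * d := by
      rw [hA2]; rfl
    have h5 : a * (X + (A1 - A2)) = a * X + a * (A1 - A2) := Nat.mul_add a X _
    have e : a * (A1 - A2) + a * A2 = a * A1 := by
      rw [← Nat.mul_add]; congr 1; omega
    have c1 : A1 * a = a * A1 := Nat.mul_comm _ _
    have c2 : A2 * a = a * A2 := Nat.mul_comm _ _
    rw [key, h4]
    omega
  · rintro ⟨S, q, rfl⟩
    refine ⟨q, S % j, S / j, ?_⟩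
    rw [gfun_eq]; ring

lemma g_step (a j h d k t : ℕ) (hj : 0 < j)
    (hakt : a + t = k * j) (hineq : h * t ≤ h * k + d) (S : ℕ) :
    gfun a j h d S ≤ gfun a j h d (S + a) := by
  have hdiv : (S + a) / j ≤ S / j + k := by
    calc (S + a) / j ≤ (S + k * j) / j := Nat.div_le_div_right (by omega)
      _ = S / j + k := Nat.add_mul_div_right S k hj
  have e1 : j * (S / j) + S % j = S := Nat.div_add_mod S j
  have e2 : j * ((S + a) / j) + (S + a) % j = S + a := Nat.div_add_mod (S + a) j
  have key : h * (S % j + S / j) ≤ h * ((S + a) % j + (S + a) / j) + d := by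
    zify at *
    nlinarith [mul_le_mul_of_nonneg_left (sub_nonneg.mpr hdiv) (by positivity : (0:ℤ) ≤ (h:ℤ)),
      mul_le_mul_of_nonneg_left (sub_nonneg.mpr hdiv) (by positivity : (0:ℤ) ≤ (h:ℤ)*(j:ℤ))]
  unfold gfun
  have h1 : h * (S % j + S / j) * a ≤ (h * ((S + a) % j + (S + a) / j) + d) * a :=
    Nat.mul_le_mul_right a key
  have expand : (h * ((S + a) % j + (S + a) / j) + d) * a
      = h * ((S + a) % j + (S + a) / j) * a + d * a := by ring
  have h2 : S * d + d * a ≤ (S + a) * d + 0 := by ring_nf; omega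
  omega

lemma g_mono (a j h d k t : ℕ) (hj : 0 < j)
    (hakt : a + t = k * j) (hineq : h * t ≤ h * k + d) (s q : ℕ) :
    gfun a j h d s ≤ gfun a j h d (s + a * q) := by
  induction q with
  | zero => simp
  | succ n ih =>
    calc gfun a j h d s ≤ gfun a j h d (s + a * n) := ih
      _ ≤ gfun a j h d (s + a * n + a) := g_step a j h d k t hj hakt hineq _
      _ = gfun a j h d (s + a * (n+1)) := by ring_nf

lemma gfun_mod (a j h d S : ℕ) : gfun a j h d S % a = S * d % a := by
  unfold gfun
  simp [Nat.mul_comm, Nat.add_mul_mod_self_left, Nat.mul_add_mod]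

/-- The set of gaps, as an explicit finset. -/
noncomputable def Fset (a j h d : ℕ) : Finset ℕ :=
  (Finset.range a).biUnion (fun s =>
    (Finset.range (gfun a j h d s / a)).image (fun i => s * d % a + a * i))

lemma notrep_eq (a j h d k t : ℕ) (ha : 0 < a) (hj : 0 < j) (had : Nat.gcd a d = 1)
    (hakt : a + t = k * j) (hineq : h * t ≤ h * k + d) :
    {m : ℕ | ¬ IsRepresentable ![a, h*a+d, h*a+j*d] m} = ↑(Fset a j h d) := by
  ext m
  simp only [Set.mem_setOf_eq, Fset, Finset.coe_biUnion, Set.mem_iUnion,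
    Finset.mem_coe, Finset.mem_image, Finset.mem_range, Finset.mem_biUnion]
  constructor
  · intro hnr
    haveI : NeZero a := ⟨by omega⟩
    have hu : IsUnit (d : ZMod a) := (ZMod.isUnit_iff_coprime d a).mpr
      (Nat.coprime_comm.mp had)
    obtain ⟨u, hu⟩ := hu
    obtain ⟨s, hs, hsm⟩ : ∃ s < a, s * d % a = m % a := by
      refine ⟨((m : ZMod a) * ↑u⁻¹).val, ZMod.val_lt _, ?_⟩
      have : ((((m : ZMod a) * ↑u⁻¹).val * d : ℕ) : ZMod a) = ((m : ℕ) : ZMod a) := by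
        push_cast
        rw [ZMod.natCast_val, ZMod.cast_id, ← hu, mul_assoc, Units.inv_mul, mul_one]
      exact (ZMod.natCast_eq_natCast_iff _ _ _).mp this
    have hmlt : m < gfun a j h d s := by
      by_contra hge
      push_neg at hge
      apply hnr
      rw [rep_iff_g a j h d m hj]
      have hmod : gfun a j h d s % a = m % a := by rw [gfun_mod]; exact hsm
      have hdvd : a ∣ m - gfun a j h d s := (Nat.modEq_iff_dvd' hge).mp hmod
      obtain ⟨c, hc⟩ := hdvd
      exact ⟨s, c, by omega⟩
    refine ⟨s, hs, m / a, ?_, ?_⟩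
    · have d1 := Nat.div_add_mod m a
      have d2 := Nat.div_add_mod (gfun a j h d s) a
      have hmod : gfun a j h d s % a = m % a := by rw [gfun_mod]; exact hsm
      by_contra hle
      push_neg at hle
      have : a * (gfun a j h d s / a) ≤ a * (m / a) := Nat.mul_le_mul_left a hle
      omega
    · have := Nat.div_add_mod m a
      omega
  · rintro ⟨s, hs, i, hi, rfl⟩
    intro hrep
    rw [rep_iff_g a j h d _ hj] at hrep
    obtain ⟨S, q, hSq⟩ := hrep
    have hm1 : (s * d % a + a * i) % a = s * d % a := by
      rw [Nat.add_mul_mod_self_left]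
      exact Nat.mod_mod_of_dvd _ dvd_rfl
    have hm2 : (gfun a j h d S + a * q) % a = S * d % a := by
      rw [Nat.add_mul_mod_self_left, gfun_mod]
    have hres : S * d % a = s * d % a := by rw [← hm2, ← hSq, hm1]
    have hmodeq : S ≡ s [MOD a] := Nat.ModEq.cancel_right_of_coprime had hres
    have hSs : S % a = s := by
      rw [← Nat.mod_eq_of_lt hs]; exact hmodeq
    have hSform : S = s + a * (S / a) := by
      have := Nat.div_add_mod S a
      omega
    have hgle : gfun a j h d s ≤ gfun a j h d S := by
      rw [hSform]; exact g_mono a j h d k t hj hakt hineq s (S / a)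
    have hmlt : s * d % a + a * i < gfun a j h d s := by
      have d2 := Nat.div_add_mod (gfun a j h d s) a
      have hmod : gfun a j h d s % a = s * d % a := gfun_mod a j h d s
      have h1 : a * (i + 1) ≤ a * (gfun a j h d s / a) := Nat.mul_le_mul_left a hi
      have h2 : a * (i + 1) = a * i + a := Nat.mul_succ a i
      omega
    omega

lemma Fset_card (a j h d : ℕ) (ha : 0 < a) (had : Nat.gcd a d = 1) :
    (Fset a j h d).card = ∑ s ∈ Finset.range a, gfun a j h d s / a := by
  unfold Fset
  rw [Finset.card_biUnion]
  · refine Finset.sum_congr rfl fun s _ => ?_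
    rw [Finset.card_image_of_injective, Finset.card_range]
    intro x y hxy
    simp only at hxy
    have : a * x = a * y := by omega
    exact Nat.eq_of_mul_eq_mul_left ha this
  · intro s hs s' hs' hne
    simp only [Finset.mem_coe, Finset.mem_range] at hs hs'
    rw [Function.onFun, Finset.disjoint_left]
    rintro x hx hx'
    simp only [Finset.mem_image, Finset.mem_range] at hx hx'
    obtain ⟨i, _, rfl⟩ := hx
    obtain ⟨i', _, he⟩ := hx'
    have h1 : (s * d % a + a * i) % a = s * d % a := by
      rw [Nat.add_mul_mod_self_left]; exact Nat.mod_mod_of_dvd _ dvd_rfl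
    have h2 : (s' * d % a + a * i') % a = s' * d % a := by
      rw [Nat.add_mul_mod_self_left]; exact Nat.mod_mod_of_dvd _ dvd_rfl
    have hres : s' * d % a = s * d % a := by rw [← h2, he, h1]
    have h3 := Nat.ModEq.cancel_right_of_coprime had hres
    have h4 : s' % a = s % a := h3
    rw [Nat.mod_eq_of_lt hs', Nat.mod_eq_of_lt hs] at h4
    exact hne h4.symm

lemma sum_mod_perm (a d : ℕ) (ha : 0 < a) (had : Nat.gcd a d = 1) :
    ∑ s ∈ Finset.range a, (s * d % a) = ∑ s ∈ Finset.range a, s := by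
  have hinj : ∀ x ∈ Finset.range a, ∀ y ∈ Finset.range a,
      x * d % a = y * d % a → x = y := by
    intro x hx y hy hxy
    simp only [Finset.mem_range] at hx hy
    have h3 := Nat.ModEq.cancel_right_of_coprime had hxy
    have h4 : x % a = y % a := h3
    rwa [Nat.mod_eq_of_lt hx, Nat.mod_eq_of_lt hy] at h4
  have hsub : (Finset.range a).image (fun s => s * d % a) ⊆ Finset.range a := by
    intro x hx
    simp only [Finset.mem_image, Finset.mem_range] at hx ⊢
    obtain ⟨s, _, rfl⟩ := hx
    exact Nat.mod_lt _ ha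
  have hcard : ((Finset.range a).image (fun s => s * d % a)).card = a := by
    rw [Finset.card_image_of_injOn hinj, Finset.card_range]
  have heq : (Finset.range a).image (fun s => s * d % a) = Finset.range a :=
    Finset.eq_of_subset_of_card_le hsub (by rw [hcard, Finset.card_range])
  have h5 : ∑ x ∈ (Finset.range a).image (fun s => s * d % a), (x : ℕ)
      = ∑ s ∈ Finset.range a, (s * d % a) := Finset.sum_image hinj
  rw [heq] at h5
  exact h5.symm

lemma sum_div_full (j : ℕ) (hj : 0 < j) (k : ℕ) :
    2 * ∑ s ∈ Finset.range (k * j), s / j = j * (k * (k - 1)) := by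
  induction k with
  | zero => simp
  | succ n ih =>
    have hsplit : ∑ s ∈ Finset.range ((n+1) * j), s / j
        = ∑ s ∈ Finset.range (n * j), s / j + ∑ s ∈ Finset.Ico (n*j) ((n+1)*j), s / j := by
      simp only [Finset.range_eq_Ico]
      rw [Finset.sum_Ico_consecutive _ (Nat.zero_le _) (by nlinarith : n*j ≤ (n+1)*j)]
    have hconst : ∑ s ∈ Finset.Ico (n*j) ((n+1)*j), s / j = j * n := by
      have : ∀ s ∈ Finset.Ico (n*j) ((n+1)*j), s / j = n := by
        intro s hs
        simp only [Finset.mem_Ico] at hs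
        have h1 : n ≤ s / j := (Nat.le_div_iff_mul_le hj).mpr hs.1
        have h2 : s / j < n + 1 := Nat.div_lt_of_lt_mul (by linarith [hs.2])
        omega
      rw [Finset.sum_congr rfl this, Finset.sum_const, Nat.card_Ico, smul_eq_mul]
      have hjj : (n+1)*j = n*j + j := by ring
      rw [hjj, Nat.add_sub_cancel_left]
    rw [hsplit, Nat.mul_add, ih, hconst]
    simp only [Nat.add_sub_cancel]
    cases n with
    | zero => simp
    | succ m => simp only [Nat.succ_sub_one]; ring

lemma sum_div_range_a (a j k t : ℕ) (hj : 0 < j) (hk : 1 ≤ k) (ht : t ≤ j - 1)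
    (hakt : a + t = k * j) :
    2 * (∑ s ∈ Finset.range a, s / j) + 2 * (t * (k - 1)) = j * (k * (k - 1)) := by
  have hfull := sum_div_full j hj k
  have hkj : (k - 1) * j + j = k * j := by
    have e : k - 1 + 1 = k := by omega
    calc (k-1) * j + j = (k - 1 + 1) * j := by ring
      _ = k * j := by rw [e]
  have hakj : a ≤ k * j := by omega
  have hsplit : ∑ s ∈ Finset.range (k * j), s / j
      = ∑ s ∈ Finset.range a, s / j + ∑ s ∈ Finset.Ico a (k * j), s / j := by
    simp only [Finset.range_eq_Ico]
    rw [Finset.sum_Ico_consecutive _ (Nat.zero_le _) hakj]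
  have hconst : ∑ s ∈ Finset.Ico a (k * j), s / j = t * (k - 1) := by
    have hterm : ∀ s ∈ Finset.Ico a (k * j), s / j = k - 1 := by
      intro s hs
      simp only [Finset.mem_Ico] at hs
      have h1 : (k - 1) ≤ s / j := (Nat.le_div_iff_mul_le hj).mpr (by omega)
      have h2 : s / j < k := (Nat.div_lt_iff_lt_mul hj).mpr hs.2
      omega
    rw [Finset.sum_congr rfl hterm, Finset.sum_const, Nat.card_Ico, smul_eq_mul]
    congr 1
    omega
  rw [← hfull, hsplit]
  omega

lemma gfun_div (a j h d s : ℕ) (ha : 0 < a) :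
    gfun a j h d s / a = h * (s % j + s / j) + s * d / a := by
  unfold gfun
  rw [Nat.add_comm, Nat.add_mul_div_right _ _ ha, Nat.add_comm]

/-- Sylvester number for `A = (a, ha+d, ha+jd)` with `a, j > 2`, `h ≥ d ≥ 1`,
`gcd(a, d) = 1`, `a = kj - t` (`k ≥ 1`, `0 ≤ t ≤ j-1`) and `hk + d - ht ≥ 0`:
`n(A) = (a-1)(ha+d-1)/2 - (h(j-1)(a-t)/2)·((a+t)/j - 1)`. -/
theorem stmt_8 (a j h d k t : ℕ) (ha : 2 < a) (hj : 2 < j) (hd : 0 < d)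
    (hdh : d ≤ h) (had : Nat.gcd a d = 1) (hk : 1 ≤ k) (ht : t ≤ j - 1)
    (hakt : a + t = k * j) (hineq : h * t ≤ h * k + d) :
    (({m : ℕ | ¬ IsRepresentable ![a, h * a + d, h * a + j * d] m}.ncard : ℚ)) =
      ((a : ℚ) - 1) * ((h : ℚ) * a + d - 1) / 2
        - ((h : ℚ) * ((j : ℚ) - 1) * ((a : ℚ) - t) / 2)
          * (((a : ℚ) + t) / j - 1) := by
  have ha0 : 0 < a := by omega
  have hj0 : 0 < j := by omega
  rw [notrep_eq a j h d k t ha0 hj0 had hakt hineq, Set.ncard_coe_finset,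
    Fset_card a j h d ha0 had]
  set S1 := ∑ s ∈ Finset.range a, s with hS1
  set S2 := ∑ s ∈ Finset.range a, s / j with hS2
  set S3 := ∑ s ∈ Finset.range a, s % j with hS3
  set S4 := ∑ s ∈ Finset.range a, s * d / a with hS4
  set S5 := ∑ s ∈ Finset.range a, (s * d % a) with hS5
  -- (1) the main sum
  have f1 : ∑ s ∈ Finset.range a, gfun a j h d s / a = h * S3 + h * S2 + S4 := by
    calc ∑ s ∈ Finset.range a, gfun a j h d s / a
        = ∑ s ∈ Finset.range a, (h * (s % j) + h * (s / j) + s * d / a) :=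
          Finset.sum_congr rfl fun s _ => by rw [gfun_div a j h d s ha0]; ring
      _ = h * S3 + h * S2 + S4 := by
          rw [Finset.sum_add_distrib, Finset.sum_add_distrib, ← Finset.mul_sum,
            ← Finset.mul_sum]
  have f2 : S5 = S1 := sum_mod_perm a d ha0 had
  have f3 : d * S1 = a * S4 + S5 := by
    calc d * S1 = ∑ s ∈ Finset.range a, (a * (s * d / a) + s * d % a) := by
          rw [hS1, Finset.mul_sum]
          exact Finset.sum_congr rfl fun s _ => by
            rw [mul_comm d s]; exact (Nat.div_add_mod (s*d) a).symm
      _ = a * S4 + S5 := by rw [Finset.sum_add_distrib, ← Finset.mul_sum]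
  have f4 : S1 = j * S2 + S3 := by
    calc S1 = ∑ s ∈ Finset.range a, (j * (s / j) + s % j) := by
          exact Finset.sum_congr rfl fun s _ => (Nat.div_add_mod s j).symm
      _ = j * S2 + S3 := by rw [Finset.sum_add_distrib, ← Finset.mul_sum]
  have f5 : S1 * 2 = a * (a - 1) := Finset.sum_range_id_mul_two a
  have f6 : 2 * S2 + 2 * (t * (k - 1)) = j * (k * (k - 1)) :=
    sum_div_range_a a j k t hj0 hk ht hakt
  rw [f1]
  -- move to ℚ
  have ha' : (a : ℚ) ≠ 0 := by positivity
  have hj' : (j : ℚ) ≠ 0 := by positivity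
  have hq : (a : ℚ) + t = k * j := by exact_mod_cast hakt
  have q2 : (S5 : ℚ) = S1 := by exact_mod_cast f2
  have q3 : (d : ℚ) * S1 = a * S4 + S5 := by exact_mod_cast f3
  have q4 : (S1 : ℚ) = j * S2 + S3 := by exact_mod_cast f4
  have q5 : (S1 : ℚ) * 2 = a * ((a : ℚ) - 1) := by
    have h1 : ((S1 * 2 : ℕ) : ℚ) = ((a * (a - 1) : ℕ) : ℚ) := by exact_mod_cast f5
    push_cast [Nat.cast_sub (show 1 ≤ a by omega)] at h1
    exact_mod_cast h1
  have q6 : 2 * (S2 : ℚ) + 2 * (t * ((k : ℚ) - 1)) = j * (k * ((k : ℚ) - 1)) := by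
    have h1 : ((2 * S2 + 2 * (t * (k - 1)) : ℕ) : ℚ) = ((j * (k * (k - 1)) : ℕ) : ℚ) := by
      exact_mod_cast f6
    push_cast [Nat.cast_sub (show 1 ≤ k by omega)] at h1
    exact_mod_cast h1
  -- explicit values
  have vS1 : (S1 : ℚ) = a * ((a : ℚ) - 1) / 2 := by linarith
  have vS2 : (S2 : ℚ) = (j * (k * ((k : ℚ) - 1)) - 2 * (t * ((k : ℚ) - 1))) / 2 := by
    linarith
  have vS3 : (S3 : ℚ) = S1 - j * S2 := by linarith
  have vS4 : (S4 : ℚ) = ((d : ℚ) - 1) * ((a : ℚ) - 1) / 2 := by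
    have e41 : (a : ℚ) * S4 = ((d : ℚ) - 1) * S1 := by linear_combination -q3 - q2
    have h' : (a : ℚ) * S4 = a * (((d : ℚ) - 1) * ((a : ℚ) - 1) / 2) := by
      rw [vS1] at e41
      linear_combination e41
    exact mul_left_cancel₀ ha' h'
  push_cast
  rw [vS3, vS2, vS1, vS4]
  rw [show (a : ℚ) = k * j - t from by linarith]
  field_simp
  ring
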